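/- Let Δ ≥ 2 and n, m be positive integers, and let a = (a₁, …, a_n) be a (Δ/2)-diverse sequence over [1, m]. Let π be a permutation of [1, m] drawn uniformly at random, let ℓ = ⌊2m·ln(Δ)/Δ⌋, let A = {i ∈ [1, n] : π(a_i) ≤ ℓ}, and let C = FillGaps(A, Δ, [1, n]). Then the expected size of C satisfies E[|C|] ≤ 2n·ln(Δ)/Δ + 6n/Δ. -/

import Mathlib

/-- `FillGaps(A, Δ, I)`: `A` together with all maximal subintervals
`[i, i+Δ] ⊆ I ∖ A` of `Δ+1` consecutive integers disjoint from `A`. -/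
def FillGaps (A : Set ℕ) (Δ : ℕ) (I : Set ℕ) : Set ℕ :=
  A ∪ {x | ∃ i, x ∈ Set.Icc i (i + Δ) ∧ Set.Icc i (i + Δ) ⊆ I \ A}

/-- The local minimum function: `localMin b Δ i` is the smallest index
`j ∈ [i, i+Δ]` at which `b` attains its minimum on `[i, i+Δ]`. -/
noncomputable def localMin {β : Type*} [LinearOrder β] (b : ℕ → β) (Δ i : ℕ) : ℕ :=
  sInf {j | j ∈ Set.Icc i (i + Δ) ∧ ∀ t ∈ Set.Icc i (i + Δ), b j ≤ b t}

/-- A sequence `a` with positions `1..n` and values in `Fin m` (representing the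
alphabet `[1,m]` via `σ ↦ σ + 1`) is `(Δ/2)`-diverse: positions carrying equal
values are at distance greater than `Δ/2`. -/
def HalfDiverse (n Δ : ℕ) {m : ℕ} (a : ℕ → Fin m) : Prop :=
  ∀ i ∈ Set.Icc 1 n, ∀ j ∈ Set.Icc 1 n, a i = a j → i < j → Δ < 2 * (j - i)

open Finset in
lemma perm_count_le (m : ℕ) (S T : Finset (Fin m)) :
    ((univ.filter fun π : Equiv.Perm (Fin m) => ∀ v ∈ T, π v ∈ S).card) * m ^ T.card
      ≤ S.card ^ T.card * Fintype.card (Equiv.Perm (Fin m)) := by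
  classical
  induction T using Finset.induction_on with
  | empty => simp [Finset.card_univ]
  | @insert w T hw ih =>
    set A := univ.filter fun π : Equiv.Perm (Fin m) => ∀ v ∈ T, π v ∈ S with hA
    have hsplit : (univ.filter fun π : Equiv.Perm (Fin m) => ∀ v ∈ insert w T, π v ∈ S)
        = A.filter (fun π => π w ∈ S) := by
      ext π
      simp only [hA, Finset.mem_filter, Finset.mem_univ, true_and, Finset.forall_mem_insert]
      tauto
    -- comparison of fibers
    have hcle : ∀ u ∈ S, ∀ u' : Fin m,
        (A.filter fun π => π w = u).card ≤ (A.filter fun π => π w = u').card := by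
      intro u hu u'
      apply Finset.card_le_card_of_injOn (fun π => (Equiv.swap u u') * π)
      · intro π hπ
        simp only [Finset.mem_coe, hA, Finset.mem_filter, Finset.mem_univ, true_and] at hπ ⊢
        obtain ⟨hT, hwu⟩ := hπ
        constructor
        · intro v hv
          have hvw : v ≠ w := fun h => hw (h ▸ hv)
          have hvu : π v ≠ u := by
            intro h
            exact hvw (π.injective (h.trans hwu.symm))
          by_cases hvu' : π v = u'
          · simpa [Equiv.Perm.mul_apply, hvu', Equiv.swap_apply_right] using hu
          · simpa [Equiv.Perm.mul_apply, Equiv.swap_apply_of_ne_of_ne hvu hvu'] using hT v hv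
        · simp [Equiv.Perm.mul_apply, hwu, Equiv.swap_apply_left]
      · intro π hπ π' hπ' h
        exact mul_left_cancel h
    have hNins : (A.filter (fun π => π w ∈ S)).card
        = ∑ u ∈ S, ((A.filter (fun π => π w ∈ S)).filter fun π => π w = u).card :=
      Finset.card_eq_sum_card_fiberwise (fun π hπ => (Finset.mem_filter.1 hπ).2)
    have hfibeq : ∀ u ∈ S, ((A.filter (fun π => π w ∈ S)).filter fun π => π w = u)
        = A.filter fun π => π w = u := by
      intro u hu
      rw [Finset.filter_filter]
      apply Finset.filter_congr
      intro π _
      constructor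
      · exact fun h => h.2
      · exact fun h => ⟨h ▸ hu, h⟩
    have hNT : A.card = ∑ u' : Fin m, (A.filter fun π => π w = u').card :=
      Finset.card_eq_sum_card_fiberwise (fun π _ => Finset.mem_univ _)
    have hkey : m * (A.filter (fun π => π w ∈ S)).card ≤ S.card * A.card := by
      calc m * (A.filter (fun π => π w ∈ S)).card
          = ∑ _u' : Fin m, ∑ u ∈ S, (A.filter fun π => π w = u).card := by
            rw [Finset.sum_const, Finset.card_univ, Fintype.card_fin, smul_eq_mul]
            rw [hNins, Finset.sum_congr rfl (fun u hu => by rw [hfibeq u hu])]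
        _ ≤ ∑ u' : Fin m, ∑ _u ∈ S, (A.filter fun π => π w = u').card := by
            apply Finset.sum_le_sum
            intro u' _
            exact Finset.sum_le_sum (fun u hu => hcle u hu u')
        _ = S.card * A.card := by
            simp only [Finset.sum_const, smul_eq_mul]
            rw [← Finset.mul_sum, hNT]
    rw [hsplit, Finset.card_insert_of_notMem hw, pow_succ, pow_succ]
    calc (A.filter (fun π => π w ∈ S)).card * (m ^ T.card * m)
        = (m * (A.filter (fun π => π w ∈ S)).card) * m ^ T.card := by ring
      _ ≤ (S.card * A.card) * m ^ T.card := Nat.mul_le_mul_right _ hkey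
      _ = S.card * (A.card * m ^ T.card) := by ring
      _ ≤ S.card * (S.card ^ T.card * Fintype.card (Equiv.Perm (Fin m))) :=
          Nat.mul_le_mul_left _ ih
      _ = S.card ^ T.card * S.card * Fintype.card (Equiv.Perm (Fin m)) := by ring

lemma two_log_le_self {x : ℝ} (hx : 2 ≤ x) : 2 * Real.log x ≤ x := by
  have h0 : (0:ℝ) < x := by linarith
  have hs : 0 < Real.sqrt x := Real.sqrt_pos.2 h0
  have h1 : Real.log (Real.sqrt x) ≤ Real.sqrt x - 1 := Real.log_le_sub_one_of_pos hs
  have h2 : Real.log (Real.sqrt x) = Real.log x / 2 := Real.log_sqrt h0.le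
  have h3 : Real.sqrt x ^ 2 = x := Real.sq_sqrt h0.le
  nlinarith [sq_nonneg (Real.sqrt x - 2)]

open Finset in
lemma card_filter_lt_fin (m ℓ : ℕ) (h : ℓ ≤ m) :
    (univ.filter fun w : Fin m => (w : ℕ) < ℓ).card = ℓ := by
  classical
  rw [show (univ.filter fun w : Fin m => (w : ℕ) < ℓ)
      = Finset.map (Fin.castLEEmb h) univ by
    ext w
    simp only [Finset.mem_filter, Finset.mem_univ, true_and, Finset.mem_map]
    constructor
    · intro hw
      exact ⟨⟨(w : ℕ), hw⟩, by simp [Fin.ext_iff]⟩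
    · rintro ⟨b, rfl⟩
      simp [b.2]]
  simp

open Finset in
lemma aux_main (n m Δ ℓ : ℕ) (hn : 0 < n) (hm : 0 < m) (hΔ : 2 ≤ Δ)
    (a : ℕ → Fin m) (hdiv : HalfDiverse n Δ a)
    (hℓ_le : (ℓ : ℝ) ≤ 2 * (m : ℝ) * Real.log Δ / Δ)
    (hℓ_gt : 2 * (m : ℝ) * Real.log Δ / Δ < ℓ + 1) :
    (∑ π : Equiv.Perm (Fin m),
        ((FillGaps {i | i ∈ Set.Icc 1 n ∧ (π (a i) : ℕ) + 1 ≤ ℓ}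
            Δ (Set.Icc 1 n)).ncard : ℝ))
      ≤ (n : ℝ) * (2 * Real.log Δ / Δ + 6 / Δ) * m.factorial := by
  classical
  have hΔR : (2:ℝ) ≤ (Δ:ℝ) := by exact_mod_cast hΔ
  have hΔpos : (0:ℝ) < Δ := by linarith
  have hmpos : (0:ℝ) < m := by exact_mod_cast hm
  have hlog0 : 0 ≤ Real.log Δ := Real.log_nonneg (by linarith)
  have h2log : 2 * Real.log Δ ≤ Δ := two_log_le_self hΔR
  have hℓm : ℓ ≤ m := by
    have h1 : (ℓ:ℝ) ≤ m := by
      calc (ℓ:ℝ) ≤ 2 * (m : ℝ) * Real.log Δ / Δ := hℓ_le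
        _ ≤ m := by rw [div_le_iff₀ hΔpos]; nlinarith
    exact_mod_cast h1
  set q : ℕ := Δ / 2 with hq
  set k0 : ℕ := q + 1 with hk0
  set C : Equiv.Perm (Fin m) → Set ℕ := fun π =>
    FillGaps {i | i ∈ Set.Icc 1 n ∧ (π (a i) : ℕ) + 1 ≤ ℓ} Δ (Set.Icc 1 n) with hCdef
  -- C π ⊆ [1, n]
  have hCsub : ∀ π, C π ⊆ Set.Icc 1 n := by
    intro π y hy
    rcases hy with hy | ⟨i, hyi, hsub⟩
    · exact hy.1
    · exact (hsub hyi).1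
  -- the U set and its cardinality
  set U : Finset (Fin m) := univ.filter (fun w : Fin m => ℓ ≤ (w : ℕ)) with hU
  have hUcard : U.card = m - ℓ := by
    have h1 := Finset.card_filter_add_card_filter_not
      (s := (univ : Finset (Fin m))) (p := fun w : Fin m => (w : ℕ) < ℓ)
    have h2 : (univ.filter fun w : Fin m => ¬ (w : ℕ) < ℓ) = U := by
      apply Finset.filter_congr; intro w _; simp [not_lt]
    rw [card_filter_lt_fin m ℓ hℓm, h2, Finset.card_univ, Fintype.card_fin] at h1
    omega
  -- the half-window counting bound
  have halfbound : ∀ u v : ℕ, Finset.Icc u v ⊆ Finset.Icc 1 n → u + q = v →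
      ((univ.filter fun π : Equiv.Perm (Fin m) =>
          ∀ j ∈ Finset.Icc u v, ℓ ≤ ((π (a j) : ℕ))).card : ℝ)
        ≤ 3 / (Δ:ℝ) * m.factorial := by
    intro u v hsubI huv
    set T : Finset (Fin m) := (Finset.Icc u v).image a with hT
    have hinj : Set.InjOn a ↑(Finset.Icc u v) := by
      intro i hi j hj hij
      simp only [Finset.coe_Icc, Set.mem_Icc] at hi hj
      by_contra hne
      have hmemi : i ∈ Set.Icc 1 n := by
        have := hsubI (Finset.mem_Icc.2 hi)
        rw [Finset.mem_Icc] at this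
        exact Set.mem_Icc.2 this
      have hmemj : j ∈ Set.Icc 1 n := by
        have := hsubI (Finset.mem_Icc.2 hj)
        rw [Finset.mem_Icc] at this
        exact Set.mem_Icc.2 this
      rcases lt_or_gt_of_ne hne with h | h
      · have := hdiv i hmemi j hmemj hij h; omega
      · have := hdiv j hmemj i hmemi hij.symm h; omega
    have hTcard : T.card = k0 := by
      rw [hT, Finset.card_image_of_injOn hinj, Nat.card_Icc]; omega
    have hk0m : k0 ≤ m := by
      rw [← hTcard]
      calc T.card ≤ (univ : Finset (Fin m)).card := Finset.card_le_univ T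
        _ = m := by simp
    have hmono : (univ.filter fun π : Equiv.Perm (Fin m) =>
          ∀ j ∈ Finset.Icc u v, ℓ ≤ ((π (a j) : ℕ)))
        ⊆ univ.filter (fun π : Equiv.Perm (Fin m) => ∀ w ∈ T, π w ∈ U) := by
      apply Finset.monotone_filter_right
      intro π _ h w hw
      obtain ⟨j, hj, rfl⟩ := Finset.mem_image.1 hw
      rw [hU, Finset.mem_filter]
      exact ⟨Finset.mem_univ _, h j hj⟩
    have hcount := perm_count_le m U T
    rw [hTcard, hUcard, Fintype.card_perm, Fintype.card_fin] at hcount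
    set N := (univ.filter fun π : Equiv.Perm (Fin m) =>
        ∀ j ∈ Finset.Icc u v, ℓ ≤ ((π (a j) : ℕ))).card with hN
    have hcount2 : N * m ^ k0 ≤ (m - ℓ) ^ k0 * m.factorial :=
      le_trans (Nat.mul_le_mul_right _ (Finset.card_le_card hmono)) hcount
    have hcR : (N : ℝ) * (m:ℝ) ^ k0 ≤ ((m:ℝ) - ℓ) ^ k0 * m.factorial := by
      have h' : ((N * m ^ k0 : ℕ) : ℝ) ≤ (((m - ℓ) ^ k0 * m.factorial : ℕ) : ℝ) :=
        Nat.cast_le.2 hcount2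
      push_cast [Nat.cast_sub hℓm] at h'
      exact h'
    have hNle : (N:ℝ) ≤ (((m:ℝ) - ℓ)/m) ^ k0 * m.factorial := by
      rw [div_pow, div_mul_eq_mul_div, le_div_iff₀ (by positivity)]
      exact hcR
    have hbase0 : (0:ℝ) ≤ ((m:ℝ) - ℓ)/m := by
      apply div_nonneg _ hmpos.le
      have : (ℓ:ℝ) ≤ m := by exact_mod_cast hℓm
      linarith
    have hbase_le : ((m:ℝ) - ℓ)/m ≤ Real.exp (-(2*Real.log Δ/Δ) + 1/m) := by
      have hexpand : (1 - 2*Real.log Δ/(Δ:ℝ) + 1/(m:ℝ)) * m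
          = (m:ℝ) - 2*(m:ℝ)*Real.log Δ/Δ + 1 := by
        field_simp
      have h1 : ((m:ℝ) - ℓ)/m ≤ 1 - 2*Real.log Δ/Δ + 1/m := by
        rw [div_le_iff₀ hmpos, hexpand]
        linarith [hℓ_gt]
      have h2 := Real.add_one_le_exp (-(2*Real.log Δ/(Δ:ℝ)) + 1/(m:ℝ))
      linarith
    have hpow : (((m:ℝ) - ℓ)/m) ^ k0 ≤ Real.exp (-(2*Real.log Δ/Δ) + 1/m) ^ k0 :=
      pow_le_pow_left₀ hbase0 hbase_le k0
    have hexp_pow : Real.exp (-(2*Real.log Δ/Δ) + 1/m) ^ k0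
        = Real.exp ((k0:ℝ) * (-(2*Real.log Δ/Δ) + 1/m)) := (Real.exp_nat_mul _ k0).symm
    have h2k0 : (Δ:ℝ) + 1 ≤ 2 * (k0:ℝ) := by
      have : Δ + 1 ≤ 2 * k0 := by omega
      exact_mod_cast this
    have hk0mR : (k0:ℝ) ≤ m := by exact_mod_cast hk0m
    have hexparg : (k0:ℝ) * (-(2*Real.log Δ/Δ) + 1/m) ≤ 1 - Real.log Δ := by
      have e4 : (0:ℝ) ≤ Real.log Δ/Δ := div_nonneg hlog0 hΔpos.le
      have e1 : ((Δ:ℝ)+1) * (Real.log Δ/Δ) ≤ (2*(k0:ℝ)) * (Real.log Δ/Δ) :=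
        mul_le_mul_of_nonneg_right h2k0 e4
      have e2 : (k0:ℝ) * (1/m) ≤ 1 := by
        rw [mul_one_div, div_le_one hmpos]; exact hk0mR
      have e3 : ((Δ:ℝ)+1) * (Real.log Δ/Δ) = Real.log Δ + Real.log Δ/Δ := by
        field_simp
      have e0 : (k0:ℝ) * (-(2*Real.log Δ/Δ) + 1/m)
          = -((2*(k0:ℝ)) * (Real.log Δ/Δ)) + (k0:ℝ) * (1/m) := by ring
      rw [e0]
      rw [e3] at e1
      linarith
    have hfinal_exp : Real.exp ((k0:ℝ) * (-(2*Real.log Δ/Δ) + 1/m)) ≤ 3 / (Δ:ℝ) := by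
      calc Real.exp ((k0:ℝ) * (-(2*Real.log Δ/Δ) + 1/m))
          ≤ Real.exp (1 - Real.log Δ) := Real.exp_le_exp.2 hexparg
        _ = Real.exp 1 / Δ := by rw [Real.exp_sub, Real.exp_log hΔpos]
        _ ≤ 3 / Δ := by
            gcongr
            have := Real.exp_one_lt_d9
            linarith
    calc (N:ℝ) ≤ (((m:ℝ) - ℓ)/m) ^ k0 * m.factorial := hNle
      _ ≤ 3 / (Δ:ℝ) * m.factorial := by
          apply mul_le_mul_of_nonneg_right _ (by positivity)
          calc (((m:ℝ) - ℓ)/m) ^ k0 ≤ Real.exp (-(2*Real.log Δ/Δ) + 1/m) ^ k0 := hpow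
            _ = Real.exp ((k0:ℝ) * (-(2*Real.log Δ/Δ) + 1/m)) := hexp_pow
            _ ≤ 3 / (Δ:ℝ) := hfinal_exp
  -- the singleton counting bound
  have hsingleton : ∀ x : ℕ,
      ((univ.filter fun π : Equiv.Perm (Fin m) => (π (a x) : ℕ) + 1 ≤ ℓ).card : ℝ)
        ≤ 2 * Real.log Δ / Δ * m.factorial := by
    intro x
    have hfilter_eq : (univ.filter fun π : Equiv.Perm (Fin m) => (π (a x) : ℕ) + 1 ≤ ℓ)
        = (univ.filter fun π : Equiv.Perm (Fin m) =>
            ∀ v ∈ ({a x} : Finset (Fin m)),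
              π v ∈ (univ.filter fun w : Fin m => (w:ℕ) < ℓ)) := by
      apply Finset.filter_congr
      intro π _
      simp only [Finset.mem_singleton, forall_eq, Finset.mem_filter, Finset.mem_univ, true_and,
        Nat.lt_iff_add_one_le]
    have hc := perm_count_le m (univ.filter fun w : Fin m => (w:ℕ) < ℓ)
      ({a x} : Finset (Fin m))
    rw [card_filter_lt_fin m ℓ hℓm, Finset.card_singleton, pow_one, pow_one,
      Fintype.card_perm, Fintype.card_fin] at hc
    rw [hfilter_eq]
    set N := (univ.filter fun π : Equiv.Perm (Fin m) =>
            ∀ v ∈ ({a x} : Finset (Fin m)),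
              π v ∈ (univ.filter fun w : Fin m => (w:ℕ) < ℓ)).card with hN
    have hcR : (N : ℝ) * m ≤ (ℓ:ℝ) * m.factorial := by exact_mod_cast hc
    have hF : (0:ℝ) ≤ m.factorial := by positivity
    have h2 : (ℓ:ℝ) * m.factorial ≤ 2 * Real.log Δ / Δ * m.factorial * m := by
      calc (ℓ:ℝ) * m.factorial ≤ (2 * (m:ℝ) * Real.log Δ / Δ) * m.factorial :=
            mul_le_mul_of_nonneg_right hℓ_le hF
        _ = 2 * Real.log Δ / Δ * m.factorial * m := by ring
    rw [← mul_le_mul_iff_of_pos_right hmpos]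
    linarith
  -- the splitting of the event x ∈ C π
  have hsplit : ∀ x, ∀ π : Equiv.Perm (Fin m), x ∈ C π →
      ((π (a x) : ℕ) + 1 ≤ ℓ)
      ∨ (Finset.Icc (x - q) x ⊆ Finset.Icc 1 n ∧
          ∀ j ∈ Finset.Icc (x - q) x, ℓ ≤ ((π (a j) : ℕ)))
      ∨ (Finset.Icc x (x + q) ⊆ Finset.Icc 1 n ∧
          ∀ j ∈ Finset.Icc x (x + q), ℓ ≤ ((π (a j) : ℕ))) := by
    intro x π hxC
    simp only [hCdef, FillGaps, Set.mem_union, Set.mem_setOf_eq] at hxC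
    rcases hxC with hA | ⟨i, hxi, hIcc⟩
    · exact Or.inl hA.2
    · obtain ⟨hi1, hi2⟩ := Set.mem_Icc.1 hxi
      have hfree : ∀ j, i ≤ j → j ≤ i + Δ → j ∈ Finset.Icc 1 n ∧ ℓ ≤ (π (a j) : ℕ) := by
        intro j h1 h2
        have hj := hIcc (Set.mem_Icc.2 ⟨h1, h2⟩)
        obtain ⟨hj1, hj2⟩ := hj
        obtain ⟨hj11, hj12⟩ := Set.mem_Icc.1 hj1
        refine ⟨Finset.mem_Icc.2 ⟨hj11, hj12⟩, ?_⟩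
        by_contra hcon
        exact hj2 ⟨hj1, by omega⟩
      rcases le_or_gt (i + q) x with hcase | hcase
      · refine Or.inr (Or.inl ⟨?_, ?_⟩)
        · intro j hj
          rw [Finset.mem_Icc] at hj
          exact (hfree j (by omega) (by omega)).1
        · intro j hj
          rw [Finset.mem_Icc] at hj
          exact (hfree j (by omega) (by omega)).2
      · have h2q : 2 * q ≤ Δ := by omega
        refine Or.inr (Or.inr ⟨?_, ?_⟩)
        · intro j hj
          rw [Finset.mem_Icc] at hj
          exact (hfree j (by omega) (by omega)).1
        · intro j hj
          rw [Finset.mem_Icc] at hj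
          exact (hfree j (by omega) (by omega)).2
  -- bounds on the two half events
  have hPL : ∀ x : ℕ,
      ((univ.filter fun π : Equiv.Perm (Fin m) =>
        Finset.Icc (x - q) x ⊆ Finset.Icc 1 n ∧
          ∀ j ∈ Finset.Icc (x - q) x, ℓ ≤ ((π (a j) : ℕ))).card : ℝ)
        ≤ 3 / (Δ:ℝ) * m.factorial := by
    intro x
    by_cases hsub : Finset.Icc (x - q) x ⊆ Finset.Icc 1 n
    · have h1 : x - q ∈ Finset.Icc 1 n := hsub (Finset.mem_Icc.2 ⟨le_refl _, Nat.sub_le _ _⟩)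
      have h1' : 1 ≤ x - q := (Finset.mem_Icc.1 h1).1
      have hveq : x - q + q = x := by omega
      refine le_trans ?_ (halfbound (x - q) x hsub hveq)
      have hss : (univ.filter fun π : Equiv.Perm (Fin m) =>
          Finset.Icc (x - q) x ⊆ Finset.Icc 1 n ∧
            ∀ j ∈ Finset.Icc (x - q) x, ℓ ≤ ((π (a j) : ℕ)))
          ⊆ (univ.filter fun π : Equiv.Perm (Fin m) =>
            ∀ j ∈ Finset.Icc (x - q) x, ℓ ≤ ((π (a j) : ℕ))) :=
        Finset.monotone_filter_right _ (fun π _ h => h.2)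
      exact_mod_cast Nat.cast_le.2 (Finset.card_le_card hss)
    · have : (univ.filter fun π : Equiv.Perm (Fin m) =>
          Finset.Icc (x - q) x ⊆ Finset.Icc 1 n ∧
            ∀ j ∈ Finset.Icc (x - q) x, ℓ ≤ ((π (a j) : ℕ))) = ∅ :=
        Finset.filter_false_of_mem (fun π _ h => hsub h.1)
      rw [this]
      simp
      positivity
  have hPR : ∀ x : ℕ,
      ((univ.filter fun π : Equiv.Perm (Fin m) =>
        Finset.Icc x (x + q) ⊆ Finset.Icc 1 n ∧
          ∀ j ∈ Finset.Icc x (x + q), ℓ ≤ ((π (a j) : ℕ))).card : ℝ)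
        ≤ 3 / (Δ:ℝ) * m.factorial := by
    intro x
    by_cases hsub : Finset.Icc x (x + q) ⊆ Finset.Icc 1 n
    · refine le_trans ?_ (halfbound x (x + q) hsub rfl)
      have hss := Finset.monotone_filter_right (univ : Finset (Equiv.Perm (Fin m)))
        (p := fun π : Equiv.Perm (Fin m) =>
          Finset.Icc x (x + q) ⊆ Finset.Icc 1 n ∧
            ∀ j ∈ Finset.Icc x (x + q), ℓ ≤ ((π (a j) : ℕ)))
        (q := fun π : Equiv.Perm (Fin m) =>
          ∀ j ∈ Finset.Icc x (x + q), ℓ ≤ ((π (a j) : ℕ)))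
        (fun π _ h => h.2)
      exact_mod_cast Nat.cast_le.2 (Finset.card_le_card hss)
    · have : (univ.filter fun π : Equiv.Perm (Fin m) =>
          Finset.Icc x (x + q) ⊆ Finset.Icc 1 n ∧
            ∀ j ∈ Finset.Icc x (x + q), ℓ ≤ ((π (a j) : ℕ))) = ∅ :=
        Finset.filter_false_of_mem (fun π _ h => hsub h.1)
      rw [this]
      simp
      positivity
  -- main chain
  calc (∑ π : Equiv.Perm (Fin m), ((C π).ncard : ℝ))
      = ∑ π : Equiv.Perm (Fin m), ∑ x ∈ Finset.Icc 1 n,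
          (if x ∈ C π then (1:ℝ) else 0) := by
        apply Finset.sum_congr rfl
        intro π _
        have hCeq : C π = ↑((Finset.Icc 1 n).filter fun x => x ∈ C π) := by
          ext y
          simp only [Finset.coe_filter, Set.mem_setOf_eq, Finset.mem_Icc]
          constructor
          · intro hy
            have := hCsub π hy
            exact ⟨⟨this.1, this.2⟩, hy⟩
          · exact fun hy => hy.2
        rw [Finset.sum_boole]
        conv_lhs => rw [hCeq]
        rw [Set.ncard_coe_finset]
    _ = ∑ x ∈ Finset.Icc 1 n, ∑ π : Equiv.Perm (Fin m),
          (if x ∈ C π then (1:ℝ) else 0) := Finset.sum_comm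
    _ ≤ ∑ x ∈ Finset.Icc 1 n,
          (2 * Real.log Δ / Δ * m.factorial + (3 / (Δ:ℝ) * m.factorial + 3 / (Δ:ℝ) * m.factorial)) := by
        apply Finset.sum_le_sum
        intro x _
        calc ∑ π : Equiv.Perm (Fin m), (if x ∈ C π then (1:ℝ) else 0)
            ≤ ∑ π : Equiv.Perm (Fin m),
              ((if (π (a x) : ℕ) + 1 ≤ ℓ then (1:ℝ) else 0)
                + ((if (Finset.Icc (x - q) x ⊆ Finset.Icc 1 n ∧
                      ∀ j ∈ Finset.Icc (x - q) x, ℓ ≤ ((π (a j) : ℕ))) then (1:ℝ) else 0)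
                  + (if (Finset.Icc x (x + q) ⊆ Finset.Icc 1 n ∧
                      ∀ j ∈ Finset.Icc x (x + q), ℓ ≤ ((π (a j) : ℕ))) then (1:ℝ) else 0))) := by
              apply Finset.sum_le_sum
              intro π _
              by_cases h : x ∈ C π
              · rcases hsplit x π h with h1 | h2 | h3
                · rw [if_pos h, if_pos h1]
                  have : (0:ℝ) ≤ (if (Finset.Icc (x - q) x ⊆ Finset.Icc 1 n ∧
                      ∀ j ∈ Finset.Icc (x - q) x, ℓ ≤ ((π (a j) : ℕ))) then (1:ℝ) else 0) := by
                    split_ifs <;> norm_num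
                  have h2' : (0:ℝ) ≤ (if (Finset.Icc x (x + q) ⊆ Finset.Icc 1 n ∧
                      ∀ j ∈ Finset.Icc x (x + q), ℓ ≤ ((π (a j) : ℕ))) then (1:ℝ) else 0) := by
                    split_ifs <;> norm_num
                  linarith
                · rw [if_pos h, if_pos h2]
                  have h1' : (0:ℝ) ≤ (if (π (a x) : ℕ) + 1 ≤ ℓ then (1:ℝ) else 0) := by
                    split_ifs <;> norm_num
                  have h3' : (0:ℝ) ≤ (if (Finset.Icc x (x + q) ⊆ Finset.Icc 1 n ∧
                      ∀ j ∈ Finset.Icc x (x + q), ℓ ≤ ((π (a j) : ℕ))) then (1:ℝ) else 0) := by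
                    split_ifs <;> norm_num
                  linarith
                · rw [if_pos h, if_pos h3]
                  have h1' : (0:ℝ) ≤ (if (π (a x) : ℕ) + 1 ≤ ℓ then (1:ℝ) else 0) := by
                    split_ifs <;> norm_num
                  have h2' : (0:ℝ) ≤ (if (Finset.Icc (x - q) x ⊆ Finset.Icc 1 n ∧
                      ∀ j ∈ Finset.Icc (x - q) x, ℓ ≤ ((π (a j) : ℕ))) then (1:ℝ) else 0) := by
                    split_ifs <;> norm_num
                  linarith
              · rw [if_neg h]
                have h1' : (0:ℝ) ≤ (if (π (a x) : ℕ) + 1 ≤ ℓ then (1:ℝ) else 0) := by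
                  split_ifs <;> norm_num
                have h2' : (0:ℝ) ≤ (if (Finset.Icc (x - q) x ⊆ Finset.Icc 1 n ∧
                    ∀ j ∈ Finset.Icc (x - q) x, ℓ ≤ ((π (a j) : ℕ))) then (1:ℝ) else 0) := by
                  split_ifs <;> norm_num
                have h3' : (0:ℝ) ≤ (if (Finset.Icc x (x + q) ⊆ Finset.Icc 1 n ∧
                    ∀ j ∈ Finset.Icc x (x + q), ℓ ≤ ((π (a j) : ℕ))) then (1:ℝ) else 0) := by
                  split_ifs <;> norm_num
                linarith
          _ = ((univ.filter fun π : Equiv.Perm (Fin m) => (π (a x) : ℕ) + 1 ≤ ℓ).card : ℝ)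
              + (((univ.filter fun π : Equiv.Perm (Fin m) =>
                  Finset.Icc (x - q) x ⊆ Finset.Icc 1 n ∧
                    ∀ j ∈ Finset.Icc (x - q) x, ℓ ≤ ((π (a j) : ℕ))).card : ℝ)
                + ((univ.filter fun π : Equiv.Perm (Fin m) =>
                  Finset.Icc x (x + q) ⊆ Finset.Icc 1 n ∧
                    ∀ j ∈ Finset.Icc x (x + q), ℓ ≤ ((π (a j) : ℕ))).card : ℝ)) := by
              rw [Finset.sum_add_distrib, Finset.sum_add_distrib,
                Finset.sum_boole, Finset.sum_boole, Finset.sum_boole]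
          _ ≤ 2 * Real.log Δ / Δ * m.factorial + (3 / (Δ:ℝ) * m.factorial + 3 / (Δ:ℝ) * m.factorial) := by
              exact add_le_add (hsingleton x) (add_le_add (hPL x) (hPR x))
    _ = (n : ℝ) * (2 * Real.log Δ / Δ + 6 / Δ) * m.factorial := by
        rw [Finset.sum_const, Nat.card_Icc]
        simp only [Nat.add_sub_cancel, nsmul_eq_mul]
        ring

/-- for a `(Δ/2)`-diverse sequence `a` over `[1,m]` (values in
`Fin m`, identified with `[1,m]` via `σ ↦ σ+1`), a uniformly random permutation
`π` of `[1,m]`, `ℓ = ⌊2m·ln(Δ)/Δ⌋`, `A = {i ∈ [1,n] : π(aᵢ) ≤ ℓ}` and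
`C = FillGaps(A, Δ, [1,n])`, the expected size of `C` is at most
`2n·ln(Δ)/Δ + 6n/Δ`. -/
theorem expected_fillGaps_size (n m Δ : ℕ) (hn : 0 < n) (hm : 0 < m) (hΔ : 2 ≤ Δ)
    (a : ℕ → Fin m) (hdiv : HalfDiverse n Δ a) :
    (∑ π : Equiv.Perm (Fin m),
        ((FillGaps
            {i | i ∈ Set.Icc 1 n ∧
              (π (a i) : ℕ) + 1 ≤ ⌊2 * (m : ℝ) * Real.log Δ / Δ⌋₊}
            Δ (Set.Icc 1 n)).ncard : ℝ))
      / (Fintype.card (Equiv.Perm (Fin m)) : ℝ)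
    ≤ 2 * n * Real.log Δ / Δ + 6 * n / Δ := by
  have hΔR : (2:ℝ) ≤ (Δ:ℝ) := by exact_mod_cast hΔ
  have hΔpos : (0:ℝ) < Δ := by linarith
  have hlog0 : 0 ≤ Real.log Δ := Real.log_nonneg (by linarith)
  have hmpos : (0:ℝ) < m := by exact_mod_cast hm
  have hlR0 : 0 ≤ 2 * (m : ℝ) * Real.log Δ / Δ := by positivity
  set ℓ : ℕ := ⌊2 * (m : ℝ) * Real.log Δ / Δ⌋₊ with hℓ
  have h1 := aux_main n m Δ ℓ hn hm hΔ a hdiv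
    (by rw [hℓ]; exact Nat.floor_le hlR0)
    (by rw [hℓ]; exact Nat.lt_floor_add_one _)
  have hM : (Fintype.card (Equiv.Perm (Fin m)) : ℝ) = m.factorial := by
    rw [Fintype.card_perm, Fintype.card_fin]
  rw [div_le_iff₀ (by rw [hM]; positivity), hM]
  calc (∑ π : Equiv.Perm (Fin m),
        ((FillGaps {i | i ∈ Set.Icc 1 n ∧ (π (a i) : ℕ) + 1 ≤ ℓ}
            Δ (Set.Icc 1 n)).ncard : ℝ))
      ≤ (n : ℝ) * (2 * Real.log Δ / Δ + 6 / Δ) * m.factorial := h1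
    _ = (2 * n * Real.log Δ / Δ + 6 * n / Δ) * m.factorial := by ring
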